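/- For each j ∈ ℤ and each positive integer q, we have t_{n-1,j+q+1} · (x_{j+2} x_{j+3} ⋯ x_{j+q+1}) + u_j t_{n-1,j} t_{q-1,j+1} = t_{n-1,j+1} t_{q,j}. -/

import Mathlib

/- Setting: a semifield `K` (commutative associative addition `add`, multiplicative
abelian group, distributivity), with `u, x : ℤ → K` being `n`-periodic families. -/

variable {K : Type*} [CommGroup K]

/-- The nonempty sum `f 0 + f 1 + ⋯ + f r` with respect to the binary operation `add`. -/
def addSum (add : K → K → K) (f : ℕ → K) : ℕ → K
  | 0 => f 0
  | r + 1 => add (addSum add f r) (f (r + 1))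

/-- The element `t_{r,j} = Σ_{k=0}^{r} (∏_{i=1}^{k} x_{j+i}) · (∏_{i=k+1}^{r} u_{j+i})`. -/
def tpoly (add : K → K → K) (u x : ℤ → K) (r : ℕ) (j : ℤ) : K :=
  addSum add
    (fun k => (∏ i ∈ Finset.Icc 1 k, x (j + i)) * ∏ i ∈ Finset.Icc (k + 1) r, u (j + i)) r


section Aux
variable (add : K → K → K)

theorem addSum_congr {f g : ℕ → K} : ∀ {r : ℕ}, (∀ k ≤ r, f k = g k) →
    addSum add f r = addSum add g r
  | 0, h => by simpa [addSum] using h 0 le_rfl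
  | r + 1, h => by
    rw [addSum, addSum, addSum_congr (fun k hk => h k (hk.trans (Nat.le_succ r))),
      h (r+1) le_rfl]

theorem addSum_mul (hdistrib : ∀ a b c : K, a * add b c = add (a * b) (a * c))
    (c : K) (f : ℕ → K) : ∀ r : ℕ, addSum add (fun k => c * f k) r = c * addSum add f r
  | 0 => rfl
  | r + 1 => by rw [addSum, addSum, addSum_mul hdistrib c f r, hdistrib]

theorem addSum_shift (hassoc : ∀ a b c : K, add (add a b) c = add a (add b c))
    (f : ℕ → K) : ∀ r : ℕ, addSum add f (r + 1) = add (f 0) (addSum add (fun k => f (k + 1)) r)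
  | 0 => rfl
  | r + 1 => by
    rw [addSum, addSum_shift hassoc f r, hassoc]; rfl

end Aux

theorem prod_shift (f : ℤ → K) (a b : ℕ) (j : ℤ) :
    ∏ i ∈ Finset.Icc (a + 1) (b + 1), f (j + i) = ∏ i ∈ Finset.Icc a b, f (j + 1 + i) := by
  rw [← Finset.map_add_right_Icc a b 1, Finset.prod_map]
  refine Finset.prod_congr rfl fun i _ => ?_
  simp [addRightEmbedding]; ring_nf

theorem prod_Icc_one_range (f : ℤ → K) (k : ℕ) (j : ℤ) :
    ∏ i ∈ Finset.Icc 1 k, f (j + i) = ∏ i ∈ Finset.range k, f (j + 1 + i) := by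
  induction k with
  | zero => simp
  | succ k ih =>
    rw [Finset.prod_Icc_succ_top (by omega) (fun i : ℕ => f (j + i)), ih,
      Finset.prod_range_succ]
    congr 2
    push_cast; ring

theorem prod_bot (f : ℤ → K) (k : ℕ) (j : ℤ) :
    ∏ i ∈ Finset.Icc 1 (k + 1), f (j + i) = f (j + 1) * ∏ i ∈ Finset.Icc 1 k, f (j + 1 + i) := by
  rw [prod_Icc_one_range, prod_Icc_one_range, Finset.prod_range_succ']
  rw [mul_comm]
  congr 1
  · simp
  · refine Finset.prod_congr rfl fun i _ => ?_
    congr 1; push_cast; ring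

/-- Recursion B: split off the top summand. -/
theorem tpoly_succB (add : K → K → K)
    (hdistrib : ∀ a b c : K, a * add b c = add (a * b) (a * c))
    (u x : ℤ → K) (r : ℕ) (j : ℤ) :
    tpoly add u x (r + 1) j =
      add (u (j + r + 1) * tpoly add u x r j) (∏ i ∈ Finset.Icc 1 (r + 1), x (j + i)) := by
  rw [tpoly, addSum]
  congr 1
  · rw [tpoly, ← addSum_mul add hdistrib]
    refine addSum_congr add fun k hk => ?_
    rw [Finset.prod_Icc_succ_top (show k + 1 ≤ r + 1 by omega) (fun i : ℕ => u (j + i))]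
    have h1 : u (j + ((r + 1 : ℕ) : ℤ)) = u (j + r + 1) := by congr 1; push_cast; ring
    rw [h1]; ac_rfl
  · rw [Finset.Icc_eq_empty (a := r + 1 + 1) (b := r + 1) (by omega), Finset.prod_empty, mul_one]

/-- Recursion A: split off the bottom summand. -/
theorem tpoly_succA (add : K → K → K)
    (hassoc : ∀ a b c : K, add (add a b) c = add a (add b c))
    (hdistrib : ∀ a b c : K, a * add b c = add (a * b) (a * c))
    (u x : ℤ → K) (r : ℕ) (j : ℤ) :
    tpoly add u x (r + 1) j =
      add (∏ i ∈ Finset.Icc 1 (r + 1), u (j + i)) (x (j + 1) * tpoly add u x r (j + 1)) := by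
  rw [tpoly, addSum_shift add hassoc]
  congr 1
  · simp
  · rw [tpoly, ← addSum_mul add hdistrib]
    refine addSum_congr add fun k hk => ?_
    rw [prod_bot x k j]
    have hu' : ∏ i ∈ Finset.Icc (k + 1 + 1) (r + 1), u (j + i)
        = ∏ i ∈ Finset.Icc (k + 1) r, u (j + 1 + i) := prod_shift u (k+1) r j
    rw [hu', mul_assoc]

def pprod (w : ℤ → K) (n : ℕ) (j : ℤ) : K := ∏ i ∈ Finset.range n, w (j + i)

theorem pprod_shift (w : ℤ → K) (n : ℕ) (hw : ∀ i : ℤ, w (i + n) = w i) (j : ℤ) :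
    pprod w n (j + 1) = pprod w n j := by
  cases n with
  | zero => rfl
  | succ s =>
    rw [pprod, pprod, Finset.prod_range_succ, Finset.prod_range_succ']
    congr 1
    · refine Finset.prod_congr rfl fun i _ => ?_
      congr 1; push_cast; ring
    · have : j + 1 + (s : ℤ) = (j + 0) + ((s + 1 : ℕ) : ℤ) := by push_cast; ring
      rw [this, hw]; norm_num

theorem pprod_const (w : ℤ → K) (n : ℕ) (hw : ∀ i : ℤ, w (i + n) = w i) (j m : ℤ) :
    pprod w n j = pprod w n m := by
  have key : ∀ k : ℤ, ∀ j : ℤ, pprod w n (j + k) = pprod w n j := by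
    intro k
    induction k using Int.induction_on with
    | zero => simp
    | succ k ih => intro j; rw [show j + ((k : ℤ) + 1) = (j + k) + 1 by ring, pprod_shift w n hw, ih]
    | pred k ih =>
      intro j
      have := pprod_shift w n hw (j + (-(k : ℤ) - 1))
      rw [show j + (-(k : ℤ) - 1) + 1 = j + -(k : ℤ) by ring] at this
      rw [show j + (-(k : ℤ) - 1) = j + (-(k:ℤ) - 1) from rfl, ← this, ih]
  have := key (m - j) j
  rw [show j + (m - j) = m by ring] at this
  exact this.symm

theorem pprod_bot (w : ℤ → K) (s : ℕ) (j : ℤ) :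
    pprod w (s + 1) j = w j * ∏ i ∈ Finset.Icc 1 s, w (j + i) := by
  rw [pprod, Finset.prod_range_succ', prod_Icc_one_range, mul_comm]
  congr 1
  · norm_num
  · refine Finset.prod_congr rfl fun i _ => ?_
    congr 1; push_cast; ring

def midSum (add : K → K → K) (u x : ℤ → K) (r : ℕ) (j : ℤ) : K :=
  addSum add (fun k => u j * ((∏ i ∈ Finset.Icc 1 (k + 1), x (j + i)) *
    ∏ i ∈ Finset.Icc (k + 1 + 1) (r + 1), u (j + i))) r

theorem decompU (add : K → K → K)
    (hassoc : ∀ a b c : K, add (add a b) c = add a (add b c))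
    (hdistrib : ∀ a b c : K, a * add b c = add (a * b) (a * c))
    (u x : ℤ → K) (r : ℕ) (j : ℤ) :
    u j * tpoly add u x (r + 1) j = add (pprod u (r + 2) j) (midSum add u x r j) := by
  rw [tpoly, ← addSum_mul add hdistrib, addSum_shift add hassoc]
  congr 1
  rw [pprod_bot u (r + 1) j, Finset.Icc_eq_empty (a := 1) (b := 0) (by omega),
    Finset.prod_empty, one_mul]

theorem decompX (add : K → K → K)
    (hdistrib : ∀ a b c : K, a * add b c = add (a * b) (a * c))
    (u x : ℤ → K) (r : ℕ) (hu : ∀ i : ℤ, u (i + ((r + 2 : ℕ) : ℤ)) = u i) (j : ℤ) :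
    x (j + 1) * tpoly add u x (r + 1) (j + 1) =
      add (midSum add u x r j) (pprod x (r + 2) (j + 1)) := by
  rw [tpoly, ← addSum_mul add hdistrib, addSum]
  congr 1
  · refine addSum_congr add fun k hk => ?_
    have ex : ∏ i ∈ Finset.Icc 1 (k + 1), x (j + i)
        = x (j + 1) * ∏ i ∈ Finset.Icc 1 k, x (j + 1 + i) := prod_bot x k j
    have eu : ∏ i ∈ Finset.Icc (k + 1) (r + 1), u (j + 1 + i)
        = ∏ i ∈ Finset.Icc (k + 1 + 1) (r + 1 + 1), u (j + i) := (prod_shift u (k+1) (r+1) j).symm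
    rw [eu, Finset.prod_Icc_succ_top (show k + 1 + 1 ≤ r + 1 + 1 by omega) (fun i : ℕ => u (j + i))]
    have hur : u (j + ((r + 1 + 1 : ℕ) : ℤ)) = u j := hu j
    rw [hur, ex]
    ac_rfl
  · rw [Finset.Icc_eq_empty (a := r + 1 + 1) (b := r + 1) (by omega), Finset.prod_empty, mul_one,
      pprod_bot x (r + 1) (j + 1)]

theorem add_shuffle (add : K → K → K)
    (hassoc : ∀ a b c : K, add (add a b) c = add a (add b c))
    (hcomm : ∀ a b : K, add a b = add b a)
    (A X P B : K) : add (add A X) (add P B) = add (add P A) (add B X) := by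
  have lc : ∀ a b c, add a (add b c) = add b (add a c) := fun a b c => by
    rw [← hassoc, hcomm a b, hassoc]
  calc add (add A X) (add P B) = add A (add X (add P B)) := hassoc ..
    _ = add A (add P (add X B)) := by rw [lc X P B]
    _ = add P (add A (add X B)) := lc ..
    _ = add P (add A (add B X)) := by rw [hcomm X B]
    _ = add (add P A) (add B X) := (hassoc ..).symm

theorem key_exchange (n : ℕ) (hn : 0 < n) (add : K → K → K)
    (hassoc : ∀ a b c : K, add (add a b) c = add a (add b c))
    (hcomm : ∀ a b : K, add a b = add b a)
    (hdistrib : ∀ a b c : K, a * add b c = add (a * b) (a * c))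
    (u x : ℤ → K) (hu : ∀ i : ℤ, u (i + n) = u i) (hx : ∀ i : ℤ, x (i + n) = x i)
    (j m : ℤ) :
    add (x (m + 1) * tpoly add u x (n - 1) (m + 1)) (u j * tpoly add u x (n - 1) j) =
      add (u m * tpoly add u x (n - 1) m) (x (j + 1) * tpoly add u x (n - 1) (j + 1)) := by
  obtain ⟨s, rfl⟩ : ∃ s, n = s + 1 := ⟨n - 1, by omega⟩
  simp only [Nat.add_sub_cancel]
  cases s with
  | zero =>
    have t0 : ∀ j' : ℤ, tpoly add u x 0 j' = 1 := by
      intro j'; simp [tpoly, addSum]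
    have hu1 : ∀ a b : ℤ, u a = u b := fun a b => by
      have := pprod_const u 1 hu a b
      simpa [pprod] using this
    have hx1 : ∀ a b : ℤ, x a = x b := fun a b => by
      have := pprod_const x 1 hx a b
      simpa [pprod] using this
    rw [t0, t0, t0, t0, mul_one, mul_one, mul_one, mul_one, hu1 j m, hx1 (m+1) (j+1), hcomm]
  | succ r =>
    have hu' : ∀ i : ℤ, u (i + ((r + 2 : ℕ) : ℤ)) = u i := fun i => hu i
    have hx' : ∀ i : ℤ, x (i + ((r + 2 : ℕ) : ℤ)) = x i := fun i => hx i
    rw [decompU add hassoc hdistrib u x r j, decompU add hassoc hdistrib u x r m,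
      decompX add hdistrib u x r hu' j, decompX add hdistrib u x r hu' m,
      pprod_const x (r + 2) hx' (m + 1) (j + 1), pprod_const u (r + 2) hu' j m]
    exact add_shuffle add hassoc hcomm _ _ _ _

theorem step_core (add : K → K → K)
    (hassoc : ∀ a b c : K, add (add a b) c = add a (add b c))
    (hcomm : ∀ a b : K, add a b = add b a)
    (hdistrib : ∀ a b c : K, a * add b c = add (a * b) (a * c))
    (Tm1 Tm Tj1 Tj xm1 xj1 um uj XQ tQ : K)
    (hkey : add (xm1 * Tm1) (uj * Tj) = add (um * Tm) (xj1 * Tj1)) :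
    add (Tm1 * (XQ * xm1)) (add (uj * Tj * (um * tQ)) (uj * Tj * XQ))
      = add (add (um * (Tm * XQ)) (um * (uj * Tj * tQ))) (Tj1 * (xj1 * XQ)) := by
  have keyX : add (XQ * (xm1 * Tm1)) (XQ * (uj * Tj))
      = add (XQ * (um * Tm)) (XQ * (xj1 * Tj1)) := by
    rw [← hdistrib, ← hdistrib, hkey]
  have lc : ∀ a b c, add a (add b c) = add b (add a c) := fun a b c => by
    rw [← hassoc, hcomm a b, hassoc]
  have e1 : Tm1 * (XQ * xm1) = XQ * (xm1 * Tm1) := by ac_rfl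
  have e2 : uj * Tj * XQ = XQ * (uj * Tj) := by ac_rfl
  have e3 : um * (Tm * XQ) = XQ * (um * Tm) := by ac_rfl
  have e4 : Tj1 * (xj1 * XQ) = XQ * (xj1 * Tj1) := by ac_rfl
  have e5 : uj * Tj * (um * tQ) = um * (uj * Tj * tQ) := by ac_rfl
  rw [e1, e2, e3, e4, e5]
  calc add (XQ * (xm1 * Tm1)) (add (um * (uj * Tj * tQ)) (XQ * (uj * Tj)))
      = add (um * (uj * Tj * tQ)) (add (XQ * (xm1 * Tm1)) (XQ * (uj * Tj))) := lc ..
    _ = add (um * (uj * Tj * tQ)) (add (XQ * (um * Tm)) (XQ * (xj1 * Tj1))) := by rw [keyX]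
    _ = add (add (um * (uj * Tj * tQ)) (XQ * (um * Tm))) (XQ * (xj1 * Tj1)) := (hassoc ..).symm
    _ = add (add (XQ * (um * Tm)) (um * (uj * Tj * tQ))) (XQ * (xj1 * Tj1)) := by
        rw [hcomm (um * (uj * Tj * tQ))]


/-- Lemma (g): `t_{n-1,j+q+1} · x_{j+2} x_{j+3} ⋯ x_{j+q+1} + u_j t_{n-1,j} t_{q-1,j+1}
= t_{n-1,j+1} t_{q,j}` for every positive integer `q`. -/
theorem tpoly_pluecker (n : ℕ) (hn : 0 < n) (add : K → K → K)
    (hadd_assoc : ∀ a b c : K, add (add a b) c = add a (add b c))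
    (hadd_comm : ∀ a b : K, add a b = add b a)
    (hdistrib : ∀ a b c : K, a * add b c = add (a * b) (a * c))
    (u x : ℤ → K) (hu : ∀ i : ℤ, u (i + n) = u i) (hx : ∀ i : ℤ, x (i + n) = x i)
    (j : ℤ) (q : ℕ) (hq : 0 < q) :
    add (tpoly add u x (n - 1) (j + q + 1) * ∏ i ∈ Finset.Icc 2 (q + 1), x (j + i))
        (u j * tpoly add u x (n - 1) j * tpoly add u x (q - 1) (j + 1)) =
      tpoly add u x (n - 1) (j + 1) * tpoly add u x q j := by
  obtain ⟨Q, rfl⟩ : ∃ Q, q = Q + 1 := ⟨q - 1, by omega⟩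
  clear hq
  simp only [Nat.add_sub_cancel]
  induction Q with
  | zero =>
    have t0 : tpoly add u x 0 (j + 1) = 1 := by simp [tpoly, addSum]
    have t1 : tpoly add u x 1 j = add (u (j + 1)) (x (j + 1)) := by
      simp [tpoly, addSum]
    have hIcc : ∏ i ∈ Finset.Icc (2:ℕ) (0 + 1 + 1), x (j + (i : ℤ)) = x (j + 2) := by
      norm_num
    rw [t0, t1, mul_one, hdistrib, hIcc]
    have a1 : tpoly add u x (n - 1) (j + ((0 + 1 : ℕ) : ℤ) + 1) * x (j + 2)
        = x (j + 1 + 1) * tpoly add u x (n - 1) (j + 1 + 1) := by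
      rw [show j + ((0 + 1 : ℕ) : ℤ) + 1 = j + 1 + 1 by push_cast; ring,
        show (j + 2 : ℤ) = j + 1 + 1 by ring, mul_comm]
    have a2 : tpoly add u x (n - 1) (j + 1) * u (j + 1)
        = u (j + 1) * tpoly add u x (n - 1) (j + 1) := mul_comm _ _
    have a3 : tpoly add u x (n - 1) (j + 1) * x (j + 1)
        = x (j + 1) * tpoly add u x (n - 1) (j + 1) := mul_comm _ _
    rw [a1, a2, a3]
    exact key_exchange n hn add hadd_assoc hadd_comm hdistrib u x hu hx j (j + 1)
  | succ Q IH =>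
    have prodX : ∏ i ∈ Finset.Icc 2 (Q + 1 + 1 + 1), x (j + (i : ℤ))
        = (∏ i ∈ Finset.Icc 2 (Q + 1 + 1), x (j + (i : ℤ))) * x (j + ((Q + 1 + 1 + 1 : ℕ) : ℤ)) :=
      Finset.prod_Icc_succ_top (by omega) _
    have px2 : ∏ i ∈ Finset.Icc 1 (Q + 1), x (j + 1 + (i : ℤ))
        = ∏ i ∈ Finset.Icc 2 (Q + 1 + 1), x (j + (i : ℤ)) := by
      have := prod_shift x 1 (Q + 1) j
      norm_num at this
      exact this.symm
    have tB1 := tpoly_succB add hdistrib u x Q (j + 1)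
    have tB2 := tpoly_succB add hdistrib u x (Q + 1) j
    have pbot := prod_bot x (Q + 1) j
    have c1 : (j + ((Q + 1 + 1 : ℕ) : ℤ) + 1) = (j + ((Q + 1 : ℕ) : ℤ) + 1) + 1 := by
      push_cast; ring
    have c2 : (j + ((Q + 1 + 1 + 1 : ℕ) : ℤ)) = (j + ((Q + 1 : ℕ) : ℤ) + 1) + 1 := by
      push_cast; ring
    have c3 : (j + 1 + ((Q : ℕ) : ℤ) + 1) = (j + ((Q + 1 : ℕ) : ℤ) + 1) := by
      push_cast; ring
    rw [prodX, tB1, tB2, pbot]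
    simp only [px2, c1, c2, c3]
    rw [hdistrib (u j * tpoly add u x (n - 1) j),
      hdistrib (tpoly add u x (n - 1) (j + 1))]
    have r1 : tpoly add u x (n - 1) (j + 1) *
          (u (j + ((Q + 1 : ℕ) : ℤ) + 1) * tpoly add u x (Q + 1) j)
        = u (j + ((Q + 1 : ℕ) : ℤ) + 1) *
          (tpoly add u x (n - 1) (j + 1) * tpoly add u x (Q + 1) j) := by ac_rfl
    rw [r1, ← IH, hdistrib (u (j + ((Q + 1 : ℕ) : ℤ) + 1))]
    exact step_core add hadd_assoc hadd_comm hdistrib _ _ _ _ _ _ _ _ _ _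
      (key_exchange n hn add hadd_assoc hadd_comm hdistrib u x hu hx j
        (j + ((Q + 1 : ℕ) : ℤ) + 1))
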